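/- Under the conditions Γ − 2μ > 2γμ/ν (with r, ν, γ, Γ, μ > 0), let N*, P*, Q* be the coexistence equilibrium quantities. Then the Jacobian entries of the reaction system at E* satisfy J*₁₂ = −γ²μ/(Q*(Γ−2μ)) < 0, J*₂₁ = (Γ−2μ)P*/(2Q*) > 0, and J*₂₂ = −μ(Γ−2μ)P*/(ΓQ*) < 0. -/

import Mathlib

set_option maxHeartbeats 1000000 in
theorem stmt_8 (r ν γ Γ μ : ℝ) (hr : 0 < r) (hν : 0 < ν) (hγ : 0 < γ) (hΓ : 0 < Γ)
    (hμ : 0 < μ) (hcond : Γ - 2 * μ > 2 * γ * μ / ν)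
    (ΔN Nstar Pstar Qstar : ℝ)
    (hΔN : ΔN = (r - γ / 2) ^ 2 + 4 * (r / ν) * (μ * γ ^ 2 / (Γ - 2 * μ)))
    (hNs : Nstar = (ν / (2 * r)) * (r - γ / 2 + Real.sqrt ΔN))
    (hPs : Pstar = (Γ / (2 * μ)) * Nstar - Γ * γ / (Γ - 2 * μ))
    (hQ : Qstar = γ + Nstar + Pstar - (4 * μ / Γ) * Pstar)
    (F G : ℝ → ℝ → ℝ)
    (hF : ∀ N P, F N P = r * (1 - N / ν) * N -
      (γ / 4) * ((γ + N + P) - Real.sqrt ((γ + N + P) ^ 2 - 4 * N * P)))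
    (hG : ∀ N P, G N P = (Γ / 4) * ((γ + N + P) - Real.sqrt ((γ + N + P) ^ 2 - 4 * N * P))
      - μ * P) :
    (deriv (fun P => F Nstar P) Pstar = -(γ ^ 2 * μ) / (Qstar * (Γ - 2 * μ)) ∧
      deriv (fun P => F Nstar P) Pstar < 0) ∧
    (deriv (fun N => G N Pstar) Nstar = (Γ - 2 * μ) * Pstar / (2 * Qstar) ∧
      deriv (fun N => G N Pstar) Nstar > 0) ∧
    (deriv (fun P => G Nstar P) Pstar = -(μ * (Γ - 2 * μ) * Pstar) / (Γ * Qstar) ∧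
      deriv (fun P => G Nstar P) Pstar < 0) := by
  have hd : 0 < Γ - 2 * μ := lt_trans (by positivity) hcond
  have hcond' : 2 * γ * μ < (Γ - 2 * μ) * ν := by
    rw [gt_iff_lt, div_lt_iff₀ hν] at hcond; linarith
  have hΔ : 0 < ΔN := by rw [hΔN]; positivity
  set s := Real.sqrt ΔN with hsdef
  have hs0 : 0 < s := Real.sqrt_pos.mpr hΔ
  have hs2 : s ^ 2 = ΔN := Real.sq_sqrt hΔ.le
  have hΔ' : ΔN * ν * (Γ - 2 * μ) =
      (r - γ / 2) ^ 2 * ν * (Γ - 2 * μ) + 4 * r * μ * γ ^ 2 := by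
    rw [hΔN]; field_simp
  -- key inequality: Nstar * (Γ - 2μ) > 2 μ γ
  have hNc : 2 * μ * γ < Nstar * (Γ - 2 * μ) := by
    rw [hNs]
    rw [div_mul_eq_mul_div, div_mul_eq_mul_div, lt_div_iff₀ (by positivity : (0:ℝ) < 2 * r)]
    by_contra hle
    push_neg at hle
    -- ν*(r-γ/2+s)*(Γ-2μ) ≤ 2μγ*(2r)
    have h1 : ν * (Γ - 2 * μ) * s ≤ 4 * r * μ * γ - ν * (Γ - 2 * μ) * (r - γ / 2) := by
      nlinarith
    have h2 : 0 < ν * (Γ - 2 * μ) * s := by positivity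
    have hXY : (ν * (Γ - 2 * μ) * s) * (ν * (Γ - 2 * μ) * s) ≤
        (4 * r * μ * γ - ν * (Γ - 2 * μ) * (r - γ / 2)) *
        (4 * r * μ * γ - ν * (Γ - 2 * μ) * (r - γ / 2)) :=
      mul_self_le_mul_self h2.le h1
    have hY2 : (ν * (Γ - 2 * μ)) ^ 2 * s ^ 2 = ν * (Γ - 2 * μ) * (ΔN * ν * (Γ - 2 * μ)) := by
      rw [hs2]; ring
    nlinarith [hXY, hY2, hΔ', hcond',
      mul_pos (mul_pos (mul_pos hr hr) hμ) hγ, mul_pos hν hd]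
  have hN0 : 0 < Nstar := by nlinarith
  have hP2 : 2 * μ * Pstar * (Γ - 2 * μ) = Γ * Nstar * (Γ - 2 * μ) - 2 * μ * Γ * γ := by
    rw [hPs]; field_simp
  have hP0 : 0 < Pstar := by
    nlinarith [mul_pos hΓ (sub_pos.mpr hNc), mul_pos hμ hd]
  have hQΓ : Qstar * Γ = (γ + Nstar + Pstar) * Γ - 4 * μ * Pstar := by
    rw [hQ]; field_simp
  have hQd : Qstar * Γ * (Γ - 2 * μ) = γ * Γ ^ 2 + Pstar * (Γ - 2 * μ) ^ 2 := by
    linear_combination (Γ - 2 * μ) * hQΓ - hP2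
  have hQ0 : 0 < Qstar := by
    nlinarith [mul_pos (mul_pos hγ hΓ) hΓ, mul_pos hP0 (mul_pos hd hd), hQd,
      mul_pos hΓ hd]
  have hSQ : (γ + Nstar + Pstar) ^ 2 - 4 * Nstar * Pstar = Qstar ^ 2 := by
    have h2 : ((γ + Nstar + Pstar) ^ 2 - 4 * Nstar * Pstar) * Γ ^ 2 = Qstar ^ 2 * Γ ^ 2 := by
      linear_combination 4 * Pstar * hP2 -
        (Qstar * Γ + (γ + Nstar + Pstar) * Γ - 4 * μ * Pstar) * hQΓ
    exact mul_right_cancel₀ (pow_ne_zero 2 (ne_of_gt hΓ)) h2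
  have hsqrtQ : Real.sqrt ((γ + Nstar + Pstar) ^ 2 - 4 * Nstar * Pstar) = Qstar := by
    rw [hSQ]; exact Real.sqrt_sq hQ0.le
  have hSne : (γ + Nstar + Pstar) ^ 2 - 4 * Nstar * Pstar ≠ 0 := by
    rw [hSQ]; positivity
  -- derivative of P ↦ F Nstar P
  have hgP : HasDerivAt (fun P : ℝ => (γ + Nstar + P) ^ 2 - 4 * Nstar * P)
      (2 * (γ + Nstar + Pstar) - 4 * Nstar) Pstar := by
    have h1 : HasDerivAt (fun P : ℝ => (γ + Nstar + P) ^ 2)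
        (2 * (γ + Nstar + Pstar)) Pstar := by
      have := ((hasDerivAt_id Pstar).const_add (γ + Nstar)).pow 2
      simp at this; exact this
    have h2 : HasDerivAt (fun P : ℝ => 4 * Nstar * P) (4 * Nstar) Pstar := by
      simpa using (hasDerivAt_id Pstar).const_mul (4 * Nstar)
    exact h1.sub h2
  have hsqP : HasDerivAt (fun P : ℝ => Real.sqrt ((γ + Nstar + P) ^ 2 - 4 * Nstar * P))
      ((2 * (γ + Nstar + Pstar) - 4 * Nstar) / (2 * Qstar)) Pstar := by
    have := hgP.sqrt hSne
    rwa [hsqrtQ] at this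
  have hFP : HasDerivAt (fun P => F Nstar P)
      (-(γ / 4) * (1 - (2 * (γ + Nstar + Pstar) - 4 * Nstar) / (2 * Qstar))) Pstar := by
    have h1 : HasDerivAt (fun P : ℝ => (γ + Nstar + P)) 1 Pstar := by
      simpa using (hasDerivAt_id Pstar).const_add (γ + Nstar)
    have h2 := ((h1.sub hsqP).const_mul (γ / 4)).const_sub (r * (1 - Nstar / ν) * Nstar)
    have heq : (fun P => F Nstar P) = fun P => r * (1 - Nstar / ν) * Nstar -
        γ / 4 * ((γ + Nstar + P) - Real.sqrt ((γ + Nstar + P) ^ 2 - 4 * Nstar * P)) := by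
      funext P; rw [hF]
    rw [heq]
    exact h2.congr_deriv (by ring)
  -- derivative of N ↦ G N Pstar
  have hgN : HasDerivAt (fun N : ℝ => (γ + N + Pstar) ^ 2 - 4 * N * Pstar)
      (2 * (γ + Nstar + Pstar) - 4 * Pstar) Nstar := by
    have h1 : HasDerivAt (fun N : ℝ => (γ + N + Pstar) ^ 2)
        (2 * (γ + Nstar + Pstar)) Nstar := by
      have h0 : HasDerivAt (fun N : ℝ => γ + N + Pstar) 1 Nstar := by
        simpa using ((hasDerivAt_id Nstar).const_add γ).add_const Pstar
      have := h0.pow 2; simp at this; exact this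
    have h2 : HasDerivAt (fun N : ℝ => 4 * N * Pstar) (4 * Pstar) Nstar := by
      have := (hasDerivAt_id Nstar).const_mul 4
      simpa using this.mul_const Pstar
    exact h1.sub h2
  have hsqN : HasDerivAt (fun N : ℝ => Real.sqrt ((γ + N + Pstar) ^ 2 - 4 * N * Pstar))
      ((2 * (γ + Nstar + Pstar) - 4 * Pstar) / (2 * Qstar)) Nstar := by
    have := hgN.sqrt hSne
    rwa [hsqrtQ] at this
  have hGN : HasDerivAt (fun N => G N Pstar)
      ((Γ / 4) * (1 - (2 * (γ + Nstar + Pstar) - 4 * Pstar) / (2 * Qstar))) Nstar := by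
    have h1 : HasDerivAt (fun N : ℝ => (γ + N + Pstar)) 1 Nstar := by
      simpa using ((hasDerivAt_id Nstar).const_add γ).add_const Pstar
    have h2 := ((h1.sub hsqN).const_mul (Γ / 4)).sub_const (μ * Pstar)
    have heq : (fun N => G N Pstar) = fun N => Γ / 4 * ((γ + N + Pstar) -
        Real.sqrt ((γ + N + Pstar) ^ 2 - 4 * N * Pstar)) - μ * Pstar := by
      funext N; rw [hG]
    rw [heq]
    exact h2.congr_deriv (by ring)
  -- derivative of P ↦ G Nstar P
  have hGP : HasDerivAt (fun P => G Nstar P)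
      ((Γ / 4) * (1 - (2 * (γ + Nstar + Pstar) - 4 * Nstar) / (2 * Qstar)) - μ) Pstar := by
    have h1 : HasDerivAt (fun P : ℝ => (γ + Nstar + P)) 1 Pstar := by
      simpa using (hasDerivAt_id Pstar).const_add (γ + Nstar)
    have h3 : HasDerivAt (fun P : ℝ => μ * P) μ Pstar := by
      simpa using (hasDerivAt_id Pstar).const_mul μ
    have h2 := ((h1.sub hsqP).const_mul (Γ / 4)).sub h3
    have heq : (fun P => G Nstar P) = fun P => Γ / 4 * ((γ + Nstar + P) -
        Real.sqrt ((γ + Nstar + P) ^ 2 - 4 * Nstar * P)) - μ * P := by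
      funext P; rw [hG]
    rw [heq]
    exact h2.congr_deriv (by ring)
  have hQne : Qstar ≠ 0 := ne_of_gt hQ0
  have hdne : Γ - 2 * μ ≠ 0 := ne_of_gt hd
  have hΓne : Γ ≠ 0 := ne_of_gt hΓ
  refine ⟨⟨?_, ?_⟩, ⟨?_, ?_⟩, ⟨?_, ?_⟩⟩
  · rw [hFP.deriv]
    field_simp
    refine mul_right_cancel₀ (ne_of_gt hΓ) ?_
    linear_combination 4 * hP2 - 2 * (Γ - 2 * μ) * hQΓ
  · rw [hFP.deriv]
    have : -(γ / 4) * (1 - (2 * (γ + Nstar + Pstar) - 4 * Nstar) / (2 * Qstar)) =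
        -(γ ^ 2 * μ) / (Qstar * (Γ - 2 * μ)) := by
      field_simp
      refine mul_right_cancel₀ (ne_of_gt hΓ) ?_
      linear_combination 4 * hP2 - 2 * (Γ - 2 * μ) * hQΓ
    rw [this]
    apply div_neg_of_neg_of_pos
    · nlinarith [mul_pos (mul_pos hγ hγ) hμ]
    · exact mul_pos hQ0 hd
  · rw [hGN.deriv]
    field_simp
    linear_combination 2 * hQΓ
  · rw [hGN.deriv]
    have : (Γ / 4) * (1 - (2 * (γ + Nstar + Pstar) - 4 * Pstar) / (2 * Qstar)) =
        (Γ - 2 * μ) * Pstar / (2 * Qstar) := by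
      field_simp
      linear_combination 2 * hQΓ
    rw [this]
    exact div_pos (mul_pos hd hP0) (by positivity)
  · rw [hGP.deriv]
    field_simp
    linear_combination (2 * Γ - 8 * μ) * hQΓ - 4 * hP2
  · rw [hGP.deriv]
    have : (Γ / 4) * (1 - (2 * (γ + Nstar + Pstar) - 4 * Nstar) / (2 * Qstar)) - μ =
        -(μ * (Γ - 2 * μ) * Pstar) / (Γ * Qstar) := by
      field_simp
      linear_combination (2 * Γ - 8 * μ) * hQΓ - 4 * hP2
    rw [this]
    apply div_neg_of_neg_of_pos
    · nlinarith [mul_pos (mul_pos hμ hd) hP0]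
    · exact mul_pos hΓ hQ0
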